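/- Under the hypotheses of the Volterra theorem, the iterates u_1 = f, u_{n+1} = μ V u_n + f converge uniformly on [a,b] to the unique solution u of u = μVu + f. -/

import Mathlib

open MeasureTheory intervalIntegral

/-- The Picard iterates for the Volterra equation: `u₁ = f`,
`u_{n+1}(x) = μ ∫_a^x K(x,y) u_n(y) dy + f(x)`. -/
noncomputable def volterraIter (K : ℝ × ℝ → ℂ) (μ : ℂ) (f : ℝ → ℂ) (a : ℝ) :
    ℕ → ℝ → ℂ
  | 0 => f
  | n + 1 => fun x => μ * (∫ y in a..x, K (x, y) * volterraIter K μ f a n y) + f x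

lemma volterra_ext_aux {α : Type*} [TopologicalSpace α] [NormalSpace α] {s : Set α}
    (hs : IsClosed s) {K : α → ℂ} (hK : ContinuousOn K s) :
    ∃ K' : α → ℂ, Continuous K' ∧ ∀ p ∈ s, K' p = K p := by
  obtain ⟨g, hg⟩ := ContinuousMap.exists_restrict_eq (Y := ℂ) hs ⟨s.restrict K, hK.restrict⟩
  exact ⟨g, g.continuous, fun p hp => by
    have := ContinuousMap.ext_iff.mp hg ⟨p, hp⟩
    exact this⟩

/-- The Volterra iterates `u₁ = f`, `u_{n+1} = μ V u_n + f` converge uniformly on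
`[a,b]` to the solution `u` of `u = μ V u + f`. -/
theorem volterra_iterates_converge_uniformly
    (a b : ℝ) (hab : a < b) (K : ℝ × ℝ → ℂ)
    (hK : ContinuousOn K {p : ℝ × ℝ | a ≤ p.2 ∧ p.2 ≤ p.1 ∧ p.1 ≤ b})
    (μ : ℂ) (f : ℝ → ℂ) (hf : ContinuousOn f (Set.Icc a b))
    (u : ℝ → ℂ) (hu : ContinuousOn u (Set.Icc a b))
    (hueq : ∀ x ∈ Set.Icc a b, u x = μ * (∫ y in a..x, K (x, y) * u y) + f x) :
    TendstoUniformlyOn (volterraIter K μ f a) u Filter.atTop (Set.Icc a b) := by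
  -- the closed triangle
  have hTclosed : IsClosed {p : ℝ × ℝ | a ≤ p.2 ∧ p.2 ≤ p.1 ∧ p.1 ≤ b} := by
    apply IsClosed.inter (isClosed_le continuous_const continuous_snd)
    exact IsClosed.inter (isClosed_le continuous_snd continuous_fst)
      (isClosed_le continuous_fst continuous_const)
  obtain ⟨K', hK'c, hK'eq⟩ := volterra_ext_aux hTclosed hK
  obtain ⟨f', hf'c, hf'eq⟩ := volterra_ext_aux isClosed_Icc hf
  set v : ℕ → ℝ → ℂ := volterraIter K' μ f' a with hv
  -- continuity of modified iterates
  have hvcont : ∀ n, Continuous (v n) := by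
    intro n
    induction n with
    | zero => exact hf'c
    | succ n ih =>
      show Continuous fun x => μ * (∫ y in a..x, K' (x, y) * v n y) + f' x
      refine Continuous.add (continuous_const.mul ?_) hf'c
      exact continuous_parametric_intervalIntegral_of_continuous
        (f := fun x y => K' (x, y) * v n y)
        (hK'c.mul (ih.comp continuous_snd)) continuous_id
  -- the iterates agree on `[a,b]`
  have hveq : ∀ n, ∀ x ∈ Set.Icc a b, volterraIter K μ f a n x = v n x := by
    intro n
    induction n with
    | zero => intro x hx; exact (hf'eq x hx).symm
    | succ n ih =>
      intro x hx
      show μ * (∫ y in a..x, K (x, y) * volterraIter K μ f a n y) + f x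
          = μ * (∫ y in a..x, K' (x, y) * v n y) + f' x
      rw [hf'eq x hx]
      congr 2
      apply intervalIntegral.integral_congr
      intro y hy
      rw [Set.uIcc_of_le hx.1] at hy
      show K (x, y) * volterraIter K μ f a n y = K' (x, y) * v n y
      rw [ih y ⟨hy.1, hy.2.trans hx.2⟩, hK'eq (x, y) ⟨hy.1, hy.2, hx.2⟩]
  -- bounds
  obtain ⟨M₀, hM₀⟩ := (isCompact_Icc.prod isCompact_Icc).exists_bound_of_continuousOn
    (s := Set.Icc a b ×ˢ Set.Icc a b) hK'c.continuousOn
  set M : ℝ := max M₀ 0 with hM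
  have hM0 : 0 ≤ M := le_max_right _ _
  have hMb : ∀ p ∈ Set.Icc a b ×ˢ Set.Icc a b, ‖K' p‖ ≤ M :=
    fun p hp => (hM₀ p hp).trans (le_max_left _ _)
  obtain ⟨C₀, hC₀⟩ := isCompact_Icc.exists_bound_of_continuousOn
    ((hf'c.continuousOn (s := Set.Icc a b)).sub hu)
  set C : ℝ := max C₀ 0 with hC
  have hC0 : 0 ≤ C := le_max_right _ _
  have hCb : ∀ x ∈ Set.Icc a b, ‖f' x - u x‖ ≤ C :=
    fun x hx => (hC₀ x hx).trans (le_max_left _ _)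
  -- key estimate
  have key : ∀ n, ∀ x ∈ Set.Icc a b,
      ‖v n x - u x‖ ≤ C * (‖μ‖ * M) ^ n * (x - a) ^ n / n.factorial := by
    intro n
    induction n with
    | zero => intro x hx; show ‖f' x - u x‖ ≤ C * (‖μ‖ * M) ^ 0 * (x - a) ^ 0 / (Nat.factorial 0); simpa using hCb x hx
    | succ n ih =>
      intro x hx
      have hax : a ≤ x := hx.1
      have hxb : x ≤ b := hx.2
      have hsub : Set.Icc a x ⊆ Set.Icc a b := Set.Icc_subset_Icc le_rfl hxb
      -- integrability facts
      have hg1 : IntervalIntegrable (fun y => K' (x, y) * v n y) volume a x :=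
        ((hK'c.comp (Continuous.prodMk_right x)).mul (hvcont n)).intervalIntegrable a x
      have hucont : ContinuousOn (fun y => K' (x, y) * u y) (Set.Icc a x) :=
        ((hK'c.comp (Continuous.prodMk_right x)).continuousOn).mul (hu.mono hsub)
      have hg2 : IntervalIntegrable (fun y => K' (x, y) * u y) volume a x := by
        apply ContinuousOn.intervalIntegrable
        rwa [Set.uIcc_of_le hax]
      -- rewrite the difference
      have hdiff : v (n + 1) x - u x
          = μ * ∫ y in a..x, (K' (x, y) * v n y - K' (x, y) * u y) := by
        have h1 : v (n + 1) x = μ * (∫ y in a..x, K' (x, y) * v n y) + f' x := rfl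
        have h2 : u x = μ * (∫ y in a..x, K' (x, y) * u y) + f x := by
          rw [hueq x hx]
          congr 2
          apply intervalIntegral.integral_congr
          intro y hy
          rw [Set.uIcc_of_le hax] at hy
          show K (x, y) * u y = K' (x, y) * u y
          rw [hK'eq (x, y) ⟨hy.1, hy.2, hxb⟩]
        rw [h1, h2, hf'eq x hx, intervalIntegral.integral_sub hg1 hg2]
        ring
      -- norm estimates
      have hnormcont : ContinuousOn (fun y => ‖K' (x, y) * v n y - K' (x, y) * u y‖)
          (Set.Icc a x) :=
        (((hK'c.comp (Continuous.prodMk_right x)).continuousOn.mul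
          (hvcont n).continuousOn).sub hucont).norm
      have hge : IntervalIntegrable (fun y => ‖K' (x, y) * v n y - K' (x, y) * u y‖)
          volume a x := by
        apply ContinuousOn.intervalIntegrable
        rwa [Set.uIcc_of_le hax]
      have hpoly : IntervalIntegrable
          (fun y => M * (C * (‖μ‖ * M) ^ n * (y - a) ^ n / n.factorial)) volume a x := by
        apply Continuous.intervalIntegrable
        fun_prop
      have hmono : (∫ y in a..x, ‖K' (x, y) * v n y - K' (x, y) * u y‖)
          ≤ ∫ y in a..x, M * (C * (‖μ‖ * M) ^ n * (y - a) ^ n / n.factorial) := by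
        apply intervalIntegral.integral_mono_on hax hge hpoly
        intro y hy
        have hyab : y ∈ Set.Icc a b := hsub hy
        have : K' (x, y) * v n y - K' (x, y) * u y = K' (x, y) * (v n y - u y) := by ring
        rw [this, norm_mul]
        exact mul_le_mul (hMb (x, y) ⟨hx, hyab⟩) (ih y hyab) (norm_nonneg _) hM0
      -- compute the polynomial integral
      have hcalc : (∫ y in a..x, M * (C * (‖μ‖ * M) ^ n * (y - a) ^ n / n.factorial))
          = (M * (C * (‖μ‖ * M) ^ n / n.factorial)) * ((x - a) ^ (n + 1) / (n + 1)) := by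
        have h1 : ∀ y : ℝ, M * (C * (‖μ‖ * M) ^ n * (y - a) ^ n / n.factorial)
            = (M * (C * (‖μ‖ * M) ^ n / n.factorial)) * (y - a) ^ n := fun y => by ring
        simp_rw [h1]
        rw [intervalIntegral.integral_const_mul]
        congr 1
        have h2 : (∫ y in a..x, (y - a) ^ n) = ∫ y in (a - a)..(x - a), y ^ n :=
          intervalIntegral.integral_comp_sub_right (fun y => y ^ n) a
        rw [h2, integral_pow]
        simp
      have hfact : ((n + 1).factorial : ℝ) = (n + 1) * n.factorial := by
        push_cast [Nat.factorial_succ]; ring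
      have hfac0 : (n.factorial : ℝ) ≠ 0 := Nat.cast_ne_zero.mpr n.factorial_ne_zero
      have hn1 : ((n : ℝ) + 1) ≠ 0 := by positivity
      calc ‖v (n + 1) x - u x‖
          = ‖μ‖ * ‖∫ y in a..x, (K' (x, y) * v n y - K' (x, y) * u y)‖ := by
            rw [hdiff, norm_mul]
        _ ≤ ‖μ‖ * ∫ y in a..x, ‖K' (x, y) * v n y - K' (x, y) * u y‖ := by
            exact mul_le_mul_of_nonneg_left
              (intervalIntegral.norm_integral_le_integral_norm hax) (norm_nonneg μ)
        _ ≤ ‖μ‖ * ((M * (C * (‖μ‖ * M) ^ n / n.factorial)) * ((x - a) ^ (n + 1) / (n + 1)))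
            := by rw [← hcalc]; exact mul_le_mul_of_nonneg_left hmono (norm_nonneg μ)
        _ = C * (‖μ‖ * M) ^ (n + 1) * (x - a) ^ (n + 1) / (n + 1).factorial := by
            rw [hfact]
            field_simp
            ring
  -- conclude uniform convergence
  rw [Metric.tendstoUniformlyOn_iff]
  intro ε hε
  set r : ℝ := ‖μ‖ * M * (b - a) with hr
  have hr0 : 0 ≤ r := by
    apply mul_nonneg (mul_nonneg (norm_nonneg μ) hM0)
    linarith
  have htend : Filter.Tendsto (fun n : ℕ => C * (r ^ n / n.factorial)) Filter.atTop (nhds 0) := by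
    have := (FloorSemiring.tendsto_pow_div_factorial_atTop (K := ℝ) r).const_mul C
    simpa using this
  filter_upwards [htend.eventually_lt_const hε] with n hn x hx
  have h1 : dist (u x) (volterraIter K μ f a n x) = ‖v n x - u x‖ := by
    rw [hveq n x hx, dist_eq_norm, norm_sub_rev]
  rw [h1]
  calc ‖v n x - u x‖ ≤ C * (‖μ‖ * M) ^ n * (x - a) ^ n / n.factorial := key n x hx
    _ = C * ((‖μ‖ * M * (x - a)) ^ n / n.factorial) := by rw [mul_pow (‖μ‖ * M) (x - a) n]; ring
    _ ≤ C * (r ^ n / n.factorial) := by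
        gcongr
        · exact mul_nonneg (mul_nonneg (norm_nonneg μ) hM0) (by linarith [hx.1])
        · exact mul_le_mul_of_nonneg_left (by linarith [hx.2]) (mul_nonneg (norm_nonneg μ) hM0)
    _ < ε := hn
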